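/- Let γ, u, v, E, ρ, ρ_∞, p be real numbers with γ ≠ 1, u ≠ 0, ρ ≠ 0, ρ_∞ ≠ 0, and set q² := u² + v². Assume D := ((γ−2)/2) q² + (γ/(γ−1)) u² + v² − γE ≠ 0. Let M be the 4×4 real matrix with rows: row 1 = (0, 1, 0, 0); row 2 = ((γ−1)q²/2 − u², (3−γ)u, (1−γ)v, γ−1); row 3 = (−vu, v, u, 0); row 4 = (((γ−1)q² − γE)u, (p/ρ + E) − (γ−1)u², (1−γ)vu, γu). Define W*₄ := (1/ρ_∞)(ρ/ρ_∞ − 1) / (D·u), W*₃ := −v·W*₄, W*₂ := −(γ/(γ−1))·u·W*₄, and W*₁ := ((γ+1)/(γ−1)·u² + v² − p/ρ − E)·W*₄. Then the row vector W* = (W*₁, W*₂, W*₃, W*₄) satisfies W*ᵀ M = ((1/ρ_∞)(ρ/ρ_∞ − 1), 0, 0, 0). -/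

import Mathlib

/-- Explicit solution of the adjoint outflow boundary condition
`W*ᵀ (n·F′(W)) = (1/ρ_∞)(ρ/ρ_∞ − 1)(1,0,0,0)` for the 2D Euler equations at a
supersonic outflow boundary parallel to the y-axis. -/
theorem adjoint_outflow_boundary_condition (γ u v E ρ ρinf p : ℝ)
    (hγ : γ ≠ 1) (hu : u ≠ 0) (hρ : ρ ≠ 0) (hρinf : ρinf ≠ 0)
    (hD : ((γ - 2) / 2) * (u ^ 2 + v ^ 2) + (γ / (γ - 1)) * u ^ 2 + v ^ 2 - γ * E ≠ 0) :
    let q2 : ℝ := u ^ 2 + v ^ 2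
    let D : ℝ := ((γ - 2) / 2) * q2 + (γ / (γ - 1)) * u ^ 2 + v ^ 2 - γ * E
    let M : Matrix (Fin 4) (Fin 4) ℝ :=
      !![0, 1, 0, 0;
         ((γ - 1) / 2) * q2 - u ^ 2, (3 - γ) * u, (1 - γ) * v, γ - 1;
         -(v * u), v, u, 0;
         ((γ - 1) * q2 - γ * E) * u, (p / ρ + E) - (γ - 1) * u ^ 2, (1 - γ) * v * u, γ * u]
    let W4 : ℝ := (1 / ρinf) * (ρ / ρinf - 1) / (D * u)
    let W3 : ℝ := -v * W4
    let W2 : ℝ := -(γ / (γ - 1)) * u * W4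
    let W1 : ℝ := ((γ + 1) / (γ - 1) * u ^ 2 + v ^ 2 - p / ρ - E) * W4
    Matrix.vecMul ![W1, W2, W3, W4] M = ![(1 / ρinf) * (ρ / ρinf - 1), 0, 0, 0] := by
  intro q2 D M W4 W3 W2 W1
  have hγ' : γ - 1 ≠ 0 := sub_ne_zero.mpr hγ
  have hγ2 : -1 + γ ≠ 0 := by intro h; exact hγ (by linarith)
  have hDu : D * u ≠ 0 := mul_ne_zero hD hu
  have hW4 : W4 * (D * u) = (1 / ρinf) * (ρ / ρinf - 1) := div_mul_cancel₀ _ hDu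
  clear_value W4
  funext j
  fin_cases j <;>
    simp only [Matrix.vecMul, dotProduct, W1, W2, W3, D, q2, M,
      Fin.sum_univ_four, Matrix.cons_val', Matrix.cons_val_zero, Matrix.cons_val_one,
      Matrix.head_cons, Matrix.empty_val', Matrix.cons_val_fin_one, Matrix.head_fin_const,
      Matrix.of_apply, Matrix.cons_val_succ, Fin.isValue, mul_zero, zero_mul, add_zero,
      mul_one, Fin.zero_eta, Fin.mk_one, Fin.reduceFinMk, Matrix.cons_val]
  · rw [← hW4]; field_simp [hγ2]; linear_combination (-(γ * u ^ 3 * W4 * 2)) * (mul_inv_cancel₀ hγ2)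
  · field_simp [hγ2]; ring
  · field_simp [hγ2]; ring
  · field_simp [hγ2]; ring
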